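/- Let A be a commutative Noetherian ring, S = A[x_1,…,x_n] graded with deg(x_i) = δ_i > 0, I ⊆ S a homogeneous ideal, and R = S/I. Assume R is finitely generated and flat as an A-module and satisfies Poincaré duality with respect to an orientation ρ: R → A concentrated in degree d. Let G_R(y_1,…,y_n) = Σ_{α_1δ_1 + ⋯ + α_nδ_n = d} ρ(x̄^α) y_1^{α_1}⋯y_n^{α_n} ∈ T = A[y_1,…,y_n], where x̄^α denotes the image in R of the monomial x_1^{α_1}⋯x_n^{α_n}. Then I = { g ∈ S : g · G_R = 0 }, where · denotes the contraction action of S on T. -/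
import Mathlib


open MvPolynomial

open Classical in
/-- The contraction action of `S = A[x₁,…,x_n]` on the inverse polynomial ring
`T = A[y₁,…,y_n]` (with `yᵢ = xᵢ⁻¹`): on monomials, `x^β · y^γ = y^{γ-β}` if `β ≤ γ`
componentwise and `0` otherwise, extended bilinearly. -/
noncomputable def contractAction {n : ℕ} {A : Type*} [CommRing A]
    (g G : MvPolynomial (Fin n) A) : MvPolynomial (Fin n) A :=
  g.support.sum fun β => G.support.sum fun m =>
    if β ≤ m then MvPolynomial.monomial (m - β) (g.coeff β * G.coeff m) else 0

/-- Let `A` be a commutative Noetherian ring, `S = A[x₁,…,x_n]` graded with `deg xᵢ = δᵢ > 0`,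
`I ⊆ S` a homogeneous ideal, and `R = S ⧸ I` finitely generated and flat as an `A`-module
(with graded components `Rcomp ν`, the images of the weighted-homogeneous components of `S`).
Suppose `R` satisfies Poincaré duality with respect to an orientation `ρ : R → A` concentrated
in degree `d`: `ρ` vanishes in degrees `≠ d`, the components vanish above degree `d`, and the
pairing `(r,s) ↦ ρ(r·s)` between `Rcomp ν` and `Rcomp (d-ν)` is perfect (nondegenerate and
surjective onto the dual). Let `G_R = Σ_{Σαᵢδᵢ = d} ρ(x̄^α) y^α` in `T = A[y₁,…,y_n]`.
Then `I = { g ∈ S : g · G_R = 0 }` for the contraction action. -/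
theorem macaulay_dual_generator
    {n : ℕ} {A : Type*} [CommRing A] [IsNoetherianRing A]
    (δ : Fin n → ℕ) (hδ : ∀ i, 0 < δ i)
    (I : Ideal (MvPolynomial (Fin n) A))
    (hI : ∀ f ∈ I, ∀ e : ℕ, MvPolynomial.weightedHomogeneousComponent δ e f ∈ I)
    (hfin : Module.Finite A (MvPolynomial (Fin n) A ⧸ I))
    (hflat : Module.Flat A (MvPolynomial (Fin n) A ⧸ I))
    (d : ℕ)
    (ρ : (MvPolynomial (Fin n) A ⧸ I) →ₗ[A] A)
    (Rcomp : ℕ → Submodule A (MvPolynomial (Fin n) A ⧸ I))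
    (hRcomp : ∀ ν, Rcomp ν = (MvPolynomial.weightedHomogeneousSubmodule A δ ν).map
        (Ideal.Quotient.mkₐ A I).toLinearMap)
    (hρgraded : ∀ ν, ν ≠ d → ∀ r ∈ Rcomp ν, ρ r = 0)
    (htop : ∀ ν, d < ν → Rcomp ν = ⊥)
    (hnondeg : ∀ ν μ : ℕ, ν + μ = d → ∀ r ∈ Rcomp ν,
        (∀ s ∈ Rcomp μ, ρ (r * s) = 0) → r = 0)
    (hsurj : ∀ ν μ : ℕ, ν + μ = d → ∀ φ : (Rcomp μ) →ₗ[A] A,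
        ∃ r ∈ Rcomp ν, ∀ s : Rcomp μ,
          φ s = ρ (r * (s : MvPolynomial (Fin n) A ⧸ I)))
    (GR : MvPolynomial (Fin n) A)
    (hGR : ∀ α : Fin n →₀ ℕ, GR.coeff α =
        (if (α.sum fun i a => a * δ i) = d
         then ρ (Ideal.Quotient.mk I (MvPolynomial.monomial α 1)) else 0)) :
    ∀ g : MvPolynomial (Fin n) A, g ∈ I ↔ contractAction g GR = 0 := by
  classical
  -- weight as in the statement
  have hwt : ∀ α : Fin n →₀ ℕ, Finsupp.weight δ α = α.sum fun i a => a * δ i := by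
    intro α; simp [Finsupp.weight_apply, smul_eq_mul, mul_comm]
  set F : MvPolynomial (Fin n) A →ₗ[A] A :=
    ρ.comp (Ideal.Quotient.mkₐ A I).toLinearMap with hFdef
  have hFapply : ∀ p : MvPolynomial (Fin n) A, F p = ρ (Ideal.Quotient.mk I p) := fun p => rfl
  -- membership of images of homogeneous polynomials in Rcomp
  have hmem : ∀ (e : ℕ) (p : MvPolynomial (Fin n) A),
      p.IsWeightedHomogeneous δ e → Ideal.Quotient.mk I p ∈ Rcomp e := by
    intro e p hp
    rw [hRcomp]
    exact ⟨p, (MvPolynomial.mem_weightedHomogeneousSubmodule A δ e p).2 hp, rfl⟩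
  -- coefficients of GR are values of F on monomials
  have hmono : ∀ α : Fin n →₀ ℕ, GR.coeff α = F (MvPolynomial.monomial α 1) := by
    intro α
    rw [hGR, hFapply]
    split_ifs with h
    · rfl
    · refine (hρgraded (Finsupp.weight δ α) ?_ _
        (hmem _ _ (isWeightedHomogeneous_monomial δ α 1 rfl))).symm
      rw [hwt]; exact h
  -- key computation of the contraction coefficients
  have hkey : ∀ (g : MvPolynomial (Fin n) A) (γ : Fin n →₀ ℕ),
      (contractAction g GR).coeff γ = F (MvPolynomial.monomial γ 1 * g) := by
    intro g γ
    have h1 : (contractAction g GR).coeff γ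
        = ∑ β ∈ g.support, g.coeff β * GR.coeff (γ + β) := by
      unfold contractAction
      rw [MvPolynomial.coeff_sum]
      refine Finset.sum_congr rfl fun β _ => ?_
      rw [MvPolynomial.coeff_sum]
      have hterm : ∀ m ∈ GR.support,
          MvPolynomial.coeff γ
            (if β ≤ m then MvPolynomial.monomial (m - β) (g.coeff β * GR.coeff m) else 0)
          = if m = γ + β then g.coeff β * GR.coeff m else 0 := by
        intro m _
        by_cases hle : β ≤ m
        · rw [if_pos hle, MvPolynomial.coeff_monomial]
          congr 1
          refine propext ⟨fun h => ?_, fun h => ?_⟩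
          · rw [← h, tsub_add_cancel_of_le hle]
          · rw [h, add_tsub_cancel_right]
        · rw [if_neg hle, MvPolynomial.coeff_zero, if_neg]
          intro h; exact hle (h ▸ le_add_self)
      rw [Finset.sum_congr rfl hterm, Finset.sum_ite_eq' GR.support (γ + β)
        (fun m => g.coeff β * GR.coeff m)]
      by_cases hmem' : γ + β ∈ GR.support
      · rw [if_pos hmem']
      · rw [if_neg hmem', MvPolynomial.notMem_support_iff.1 hmem', mul_zero]
    rw [h1]
    conv_rhs => rw [g.as_sum]
    rw [Finset.mul_sum, map_sum]
    refine Finset.sum_congr rfl fun β _ => ?_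
    rw [hmono, MvPolynomial.monomial_mul, one_mul]
    have : (MvPolynomial.monomial (γ + β)) (g.coeff β)
        = g.coeff β • (MvPolynomial.monomial (γ + β)) (1 : A) := by
      rw [MvPolynomial.smul_monomial, smul_eq_mul, mul_one]
    rw [this, map_smul, smul_eq_mul]
  intro g
  constructor
  · -- g ∈ I → contraction vanishes
    intro hg
    apply MvPolynomial.ext
    intro γ
    rw [hkey, MvPolynomial.coeff_zero, hFapply,
      Ideal.Quotient.eq_zero_iff_mem.2 (I.mul_mem_left _ hg), map_zero]
  · intro h0
    -- F (h * g) = 0 for every h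
    have hall : ∀ h : MvPolynomial (Fin n) A, F (h * g) = 0 := by
      intro h
      have hγ : ∀ γ : Fin n →₀ ℕ, F (MvPolynomial.monomial γ 1 * g) = 0 := by
        intro γ; rw [← hkey, h0, MvPolynomial.coeff_zero]
      conv_lhs => rw [h.as_sum]
      rw [Finset.sum_mul, map_sum]
      refine Finset.sum_eq_zero fun γ _ => ?_
      have : (MvPolynomial.monomial γ) (h.coeff γ)
          = h.coeff γ • (MvPolynomial.monomial γ) (1 : A) := by
        rw [MvPolynomial.smul_monomial, smul_eq_mul, mul_one]
      rw [this, smul_mul_assoc, map_smul, hγ, smul_zero]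
    -- each weighted homogeneous component of g lies in I
    have hcomp : ∀ ν : ℕ, MvPolynomial.weightedHomogeneousComponent δ ν g ∈ I := by
      intro ν
      set gν := MvPolynomial.weightedHomogeneousComponent δ ν g with hgν
      have hgνhom : gν.IsWeightedHomogeneous δ ν :=
        MvPolynomial.weightedHomogeneousComponent_isWeightedHomogeneous ν g
      have hmkmem : Ideal.Quotient.mk I gν ∈ Rcomp ν := hmem ν gν hgνhom
      rw [← Ideal.Quotient.eq_zero_iff_mem]
      by_cases hν : ν ≤ d
      · refine hnondeg ν (d - ν) (by omega) _ hmkmem ?_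
        intro s hs
        rw [hRcomp] at hs
        obtain ⟨h, hh, rfl⟩ := hs
        replace hh : h.IsWeightedHomogeneous δ (d - ν) :=
          (MvPolynomial.mem_weightedHomogeneousSubmodule A δ (d - ν) h).1 hh
        have key : ∀ q : MvPolynomial (Fin n) A,
            (∀ γ ∈ q.support, Finsupp.weight δ γ ≠ ν) → F (q * h) = 0 := by
          intro q hq
          conv_lhs => rw [q.as_sum]
          rw [Finset.sum_mul, map_sum]
          refine Finset.sum_eq_zero fun γ hγ => ?_
          have heq : (MvPolynomial.monomial γ) (q.coeff γ)
              = q.coeff γ • (MvPolynomial.monomial γ) (1 : A) := by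
            rw [MvPolynomial.smul_monomial, smul_eq_mul, mul_one]
          rw [heq, smul_mul_assoc, map_smul, smul_eq_mul]
          have hprod : (MvPolynomial.monomial γ (1:A) * h).IsWeightedHomogeneous δ
              (Finsupp.weight δ γ + (d - ν)) :=
            (isWeightedHomogeneous_monomial δ γ 1 rfl).mul hh
          rw [hFapply, hρgraded (Finsupp.weight δ γ + (d - ν))
            (by have := hq γ hγ; omega) _ (hmem _ _ hprod), mul_zero]
        have hdiff : F ((g - gν) * h) = 0 := by
          refine key _ fun γ hγ hwγ => ?_
          have : MvPolynomial.coeff γ (g - gν) = 0 := by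
            rw [MvPolynomial.coeff_sub, hgν,
              MvPolynomial.coeff_weightedHomogeneousComponent, if_pos hwγ, sub_self]
          exact (MvPolynomial.mem_support_iff.1 hγ) this
        have : F (gν * h) = F (g * h) - F ((g - gν) * h) := by
          rw [← map_sub, ← sub_mul, sub_sub_cancel]
        rw [hFapply] at this
        show ρ (Ideal.Quotient.mk I gν * Ideal.Quotient.mk I h) = 0
        rw [← map_mul, this, mul_comm g h, hall, hdiff, sub_zero]
      · have : Rcomp ν = ⊥ := htop ν (by omega)
        rw [this, Submodule.mem_bot] at hmkmem
        exact hmkmem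
    have hsum := MvPolynomial.sum_weightedHomogeneousComponent δ g
    rw [← hsum, finsum_eq_sum _ (MvPolynomial.weightedHomogeneousComponent_finsupp g)]
    exact Ideal.sum_mem _ fun ν _ => hcomp ν
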